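/- Let A be a regular dually pseudocomplemented Heyting algebra. Then for all x, y ∈ A, x → y = (x* ∨ y**)** ∧ ((x ∨ x*)⁺ ∨ x* ∨ y ∨ y*), i.e., the Heyting implication is given by Katriňák's term. -/
import Mathlib


theorem stmt18 (A : Type*) [HeytingAlgebra A] (p : A → A)
    (hp : ∀ x, x ⊔ p x = ⊤) (hleast : ∀ x z, x ⊔ z = ⊤ → p x ≤ z)
    (hreg : ∀ x y : A, x ⇨ (⊥ : A) = y ⇨ (⊥ : A) → p x = p y → x = y)
    (x y : A) :
    x ⇨ y =
      (((((x ⇨ (⊥ : A)) ⊔ ((y ⇨ (⊥ : A)) ⇨ (⊥ : A))) ⇨ (⊥ : A)) ⇨ (⊥ : A)) ⊓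
        (p (x ⊔ (x ⇨ (⊥ : A))) ⊔ (x ⇨ (⊥ : A)) ⊔ y ⊔ (y ⇨ (⊥ : A)))) := by
  simp only [himp_bot]
  -- Key consequence of regularity: u ⊓ p u ≤ t ⊔ tᶜ
  have key : ∀ u t : A, u ⊓ p u ≤ t ⊔ tᶜ := by
    intro u t
    set d := t ⊔ tᶜ with hd
    set a := (u ⊓ p u) ⊔ d with ha
    have hda : d ≤ a := le_sup_right
    have hdc : dᶜ = ⊥ := by
      rw [hd, compl_sup]; exact inf_compl_self tᶜ
    have hac : aᶜ = ⊥ := le_bot_iff.mp (hdc ▸ compl_anti hda)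
    have hpa_le : p a ≤ p d := hleast a _ (top_le_iff.mp (by rw [← hp d]; exact sup_le_sup_right hda _))
    have hz : d ⊔ p a = ⊤ := by
      have h1 : (u ⊔ (d ⊔ p a)) ⊓ (p u ⊔ (d ⊔ p a)) = ⊤ := by
        rw [← sup_inf_right, ← sup_assoc, ← ha]; exact hp a
      have hu : u ⊔ (d ⊔ p a) = ⊤ := top_le_iff.mp (h1 ▸ inf_le_left)
      have hpu : p u ⊔ (d ⊔ p a) = ⊤ := top_le_iff.mp (h1 ▸ inf_le_right)
      have := hleast u _ hu
      exact top_le_iff.mp (hpu ▸ sup_le this le_rfl)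
    have hpd_le : p d ≤ p a := hleast d _ hz
    have : a = d := hreg a d (by rw [himp_bot, himp_bot, hac, hdc]) (le_antisymm hpa_le hpd_le)
    calc u ⊓ p u ≤ a := le_sup_left
      _ = d := this
  -- abbreviations
  set s := x ⊔ xᶜ with hs
  have hK : (xᶜ ⊔ yᶜᶜ)ᶜ = xᶜᶜ ⊓ yᶜ := by rw [compl_sup, compl_compl_compl]
  -- (x ⇨ y)ᶜ = xᶜᶜ ⊓ yᶜ
  have hcxy : (x ⇨ y)ᶜ = xᶜᶜ ⊓ yᶜ := by
    apply le_antisymm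
    · exact le_inf (compl_anti compl_le_himp) (compl_anti le_himp)
    · rw [le_compl_iff_disjoint_right, disjoint_iff]
      refine le_bot_iff.mp ?_
      have h1 : (x ⇨ y) ⊓ yᶜ ≤ xᶜ := by
        rw [← @himp_bot A _ x, le_himp_iff]
        calc (x ⇨ y) ⊓ yᶜ ⊓ x ≤ y ⊓ yᶜ := by
              refine le_inf ?_ (le_trans inf_le_left inf_le_right)
              exact le_trans (inf_le_inf_right x inf_le_left) himp_inf_le
          _ = ⊥ := inf_compl_self y
      calc xᶜᶜ ⊓ yᶜ ⊓ (x ⇨ y) ≤ xᶜᶜ ⊓ xᶜ := by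
            refine le_inf (le_trans inf_le_left inf_le_left) ?_
            calc xᶜᶜ ⊓ yᶜ ⊓ (x ⇨ y) ≤ (x ⇨ y) ⊓ yᶜ :=
                  le_inf inf_le_right (le_trans inf_le_left inf_le_right)
              _ ≤ xᶜ := h1
        _ ≤ ⊥ := (compl_inf_self _).le
  apply le_antisymm
  · refine le_inf ?_ ?_
    · calc x ⇨ y ≤ (x ⇨ y)ᶜᶜ := le_compl_compl
        _ = (xᶜ ⊔ yᶜᶜ)ᶜᶜ := by rw [hcxy, ← hK]
    · have hsplit : x ⇨ y = ((x ⇨ y) ⊓ s) ⊔ ((x ⇨ y) ⊓ p s) := by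
        rw [← inf_sup_left, hp, inf_top_eq]
      rw [hsplit]
      refine sup_le ?_ ?_
      · rw [hs, inf_sup_left]
        refine sup_le ?_ ?_
        · exact le_trans himp_inf_le (le_sup_of_le_left le_sup_right)
        · exact le_trans inf_le_right (le_sup_of_le_left (le_sup_of_le_left le_sup_right))
      · exact le_trans inf_le_right (le_sup_of_le_left (le_sup_of_le_left le_sup_left))
  · rw [le_himp_iff]
    set K := (xᶜ ⊔ yᶜᶜ)ᶜᶜ with hKdef
    have h4 : K ⊓ (x ⊓ yᶜ) = ⊥ := by
      have : x ⊓ yᶜ ≤ Kᶜ := by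
        rw [hKdef, compl_compl_compl, hK]
        exact inf_le_inf_right _ le_compl_compl
      exact le_bot_iff.mp (le_trans (inf_le_inf_left K this) (inf_compl_self K).le)
    have h1 : K ⊓ (x ⊓ p s) ≤ y := by
      have hxps : x ⊓ p s ≤ y ⊔ yᶜ :=
        le_trans (inf_le_inf_right (p s) le_sup_left) (key s y)
      calc K ⊓ (x ⊓ p s) ≤ (K ⊓ x) ⊓ (y ⊔ yᶜ) :=
            le_inf (le_inf inf_le_left (inf_le_right.trans inf_le_left)) (inf_le_right.trans hxps)
        _ = ((K ⊓ x) ⊓ y) ⊔ ((K ⊓ x) ⊓ yᶜ) := inf_sup_left _ _ _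
        _ ≤ y ⊔ ⊥ := by
            refine sup_le (le_trans inf_le_right le_sup_left) (le_trans ?_ le_sup_right)
            rw [← h4]; exact le_of_eq (inf_assoc K x yᶜ)
        _ = y := sup_bot_eq y
    have h4' : K ⊓ x ⊓ yᶜ = ⊥ := by rw [inf_assoc]; exact h4
    have h1' : K ⊓ x ⊓ p s ≤ y := by rw [inf_assoc]; exact h1
    calc K ⊓ (p s ⊔ xᶜ ⊔ y ⊔ yᶜ) ⊓ x
        = (K ⊓ x ⊓ p s ⊔ K ⊓ x ⊓ xᶜ ⊔ K ⊓ x ⊓ y) ⊔ K ⊓ x ⊓ yᶜ := by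
          rw [inf_right_comm, inf_sup_left, inf_sup_left, inf_sup_left]
      _ ≤ y := by
          refine sup_le (sup_le (sup_le h1' ?_) inf_le_right) ?_
          · rw [inf_assoc, inf_compl_self, inf_bot_eq]; exact bot_le
          · rw [h4']; exact bot_le
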